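/- Let d ≥ 1, let p ∈ (1, ∞) and let q be its conjugate exponent, i.e. 1/p + 1/q = 1. Let a_1, …, a_m be vectors in ℝ^d. Then the supremum over all r ∈ ℝ^d with ℓ_p-norm ‖r‖_p = 1 of ∑_{j=1}^m max(∑_{i=1}^d r_i (a_j)_i, 0) equals the maximum over b ∈ {0,1}^m of the ℓ_q-norm ‖∑_{j=1}^m b_j a_j‖_q. -/

import Mathlib

open scoped BigOperators

/-- A coordinate basis vector has unit `ℓ_p` norm. -/
lemma lp_norm_single {d : ℕ} (i0 : Fin d) (p : ℝ) (hp : 0 < p) :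
    (∑ i, |(Pi.single i0 1 : Fin d → ℝ) i| ^ p) ^ (1 / p) = 1 := by
  have : ∀ i : Fin d, |(Pi.single i0 1 : Fin d → ℝ) i| ^ p = (if i = i0 then (1:ℝ) else 0) := by
    intro i
    by_cases h : i = i0
    · subst h; simp [Pi.single_eq_same, Real.one_rpow]
    · simp [Pi.single_eq_of_ne h, Real.zero_rpow hp.ne', h]
  rw [Finset.sum_congr rfl (fun i _ => this i)]
  simp [Real.one_rpow]

/-- Dual attainment: for any vector `v` there is a unit `ℓ_p` vector `r` with
`⟨r, v⟩ ≥ ‖v‖_q`. -/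
lemma exists_unit_lp_dot_ge {d : ℕ} (hd : 1 ≤ d) {p q : ℝ} (hpq : Real.HolderConjugate p q)
    (v : Fin d → ℝ) :
    ∃ r : Fin d → ℝ, (∑ i, |r i| ^ p) ^ (1 / p) = 1 ∧
      (∑ i, |v i| ^ q) ^ (1 / q) ≤ ∑ i, r i * v i := by
  have hq := hpq.symm
  have hp0 : (0:ℝ) < p := hpq.pos
  have hq0 : (0:ℝ) < q := hq.pos
  by_cases hv : ∀ i, v i = 0
  · refine ⟨Pi.single ⟨0, hd⟩ 1, lp_norm_single _ p hp0, ?_⟩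
    have h1 : ∀ i : Fin d, |v i| ^ q = 0 := by
      intro i; simp [hv i, Real.zero_rpow hq0.ne']
    rw [Finset.sum_congr rfl (fun i _ => h1 i), Finset.sum_const_zero,
      Real.zero_rpow (one_div_ne_zero hq0.ne')]
    simp [hv]
  · push_neg at hv
    obtain ⟨i0, hi0⟩ := hv
    set S : ℝ := ∑ i, |v i| ^ q with hS
    have hSpos : 0 < S := by
      apply Finset.sum_pos'
      · intro i _; positivity
      · exact ⟨i0, Finset.mem_univ _, by positivity⟩
    refine ⟨fun i => Real.sign (v i) * |v i| ^ (q - 1) / S ^ (1 / p), ?_, ?_⟩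
    · have habs : ∀ i : Fin d, |Real.sign (v i) * |v i| ^ (q - 1) / S ^ (1 / p)|
          = |v i| ^ (q - 1) / S ^ (1 / p) := by
        intro i
        rw [abs_div, abs_mul]
        by_cases h : v i = 0
        · simp [h, Real.zero_rpow (by linarith [hq.lt] : q - 1 ≠ 0)]
        · rcases lt_or_gt_of_ne h with h' | h'
          · rw [Real.sign_of_neg h']
            simp [abs_of_nonneg (Real.rpow_nonneg (abs_nonneg _) _),
              abs_of_nonneg (Real.rpow_nonneg hSpos.le _), abs_neg, abs_one]
          · rw [Real.sign_of_pos h']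
            simp [abs_of_nonneg (Real.rpow_nonneg (abs_nonneg _) _),
              abs_of_nonneg (Real.rpow_nonneg hSpos.le _)]
      have hqp : (q - 1) * p = q := by
        have h2 := hpq.mul_eq_add
        nlinarith [h2]
      have hterm : ∀ i : Fin d,
          |Real.sign (v i) * |v i| ^ (q - 1) / S ^ (1 / p)| ^ p = |v i| ^ q / S := by
        intro i
        rw [habs i, Real.div_rpow (Real.rpow_nonneg (abs_nonneg _) _)
          (Real.rpow_nonneg hSpos.le _)]
        rw [← Real.rpow_mul (abs_nonneg _), ← Real.rpow_mul hSpos.le, hqp]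
        rw [one_div, inv_mul_cancel₀ hp0.ne', Real.rpow_one]
      rw [Finset.sum_congr rfl (fun i _ => hterm i), ← Finset.sum_div, ← hS,
        div_self hSpos.ne']
      simp [Real.one_rpow]
    · have hterm : ∀ i : Fin d,
          Real.sign (v i) * |v i| ^ (q - 1) / S ^ (1 / p) * v i = |v i| ^ q / S ^ (1 / p) := by
        intro i
        by_cases h : v i = 0
        · simp [h, Real.zero_rpow hq0.ne']
        · have hsv : Real.sign (v i) * v i = |v i| := by
            rcases lt_or_gt_of_ne h with h' | h'
            · rw [Real.sign_of_neg h', abs_of_neg h']; ring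
            · rw [Real.sign_of_pos h', abs_of_pos h']; ring
          have habsq : |v i| * |v i| ^ (q - 1) = |v i| ^ q := by
            have habs0 : (0:ℝ) < |v i| := abs_pos.2 h
            have h2 := Real.rpow_add habs0 1 (q - 1)
            rw [show (1:ℝ) + (q - 1) = q by ring, Real.rpow_one] at h2
            exact h2.symm
          calc Real.sign (v i) * |v i| ^ (q - 1) / S ^ (1 / p) * v i
              = (Real.sign (v i) * v i) * |v i| ^ (q - 1) / S ^ (1 / p) := by ring
            _ = |v i| ^ q / S ^ (1 / p) := by rw [hsv, habsq]
      rw [Finset.sum_congr rfl (fun i _ => hterm i), ← Finset.sum_div, ← hS]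
      have h1q : 1 / q = 1 - 1 / p := by
        have := hpq.inv_add_inv_eq_one
        rw [one_div, one_div]; linarith
      rw [h1q, Real.rpow_sub hSpos, Real.rpow_one]

/-- The dual-norm identity of Eq. (11) of the paper for general conjugate exponents
`p, q`: the supremum over `ℓ_p`-unit directions `r` of `∑ j, max(∑ i, r i * a j i, 0)`
equals the maximum over `b ∈ {0,1}^m` of the `ℓ_q`-norm of `∑ j, b j • a j`. -/
theorem sup_sum_posPart_pairing_lp_sphere_eq_max_subset_sum_lq_norm
    {d m : ℕ} (hd : 1 ≤ d) (p q : ℝ) (hp : 1 < p) (hpq : 1 / p + 1 / q = 1)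
    (a : Fin m → Fin d → ℝ) :
    (⨆ r : {r : Fin d → ℝ // (∑ i, |r i| ^ p) ^ (1 / p) = 1},
        ∑ j, max (∑ i, (r : Fin d → ℝ) i * a j i) 0) =
      ⨆ b : Fin m → Bool, (∑ i, |∑ j, if b j then a j i else 0| ^ q) ^ (1 / q) := by
  have hcpq : Real.HolderConjugate p q := Real.holderConjugate_iff.mpr ⟨hp, by rw [← one_div, ← one_div]; exact hpq⟩
  set s : (Fin m → Bool) → Fin d → ℝ := fun b i => ∑ j, if b j then a j i else 0 with hs
  set F : (Fin m → Bool) → ℝ := fun b => (∑ i, |s b i| ^ q) ^ (1 / q) with hF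
  -- swapping sums
  have hswap : ∀ (r : Fin d → ℝ) (b : Fin m → Bool),
      ∑ i, r i * s b i = ∑ j, if b j then (∑ i, r i * a j i) else 0 := by
    intro r b
    simp only [hs, Finset.mul_sum]
    rw [Finset.sum_comm]
    refine Finset.sum_congr rfl fun j _ => ?_
    by_cases h : b j <;> simp [h, Finset.mul_sum]
  haveI hne : Nonempty {r : Fin d → ℝ // (∑ i, |r i| ^ p) ^ (1 / p) = 1} :=
    ⟨⟨Pi.single ⟨0, hd⟩ 1, lp_norm_single _ p hcpq.pos⟩⟩
  -- every LHS term is ≤ the RHS sup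
  have hub : ∀ r : {r : Fin d → ℝ // (∑ i, |r i| ^ p) ^ (1 / p) = 1},
      (∑ j, max (∑ i, (r : Fin d → ℝ) i * a j i) 0) ≤ ⨆ b, F b := by
    intro r
    set b : Fin m → Bool := fun j => decide (0 < ∑ i, (r : Fin d → ℝ) i * a j i) with hb
    have h1 : (∑ j, max (∑ i, (r : Fin d → ℝ) i * a j i) 0)
        = ∑ i, (r : Fin d → ℝ) i * s b i := by
      rw [hswap]
      refine Finset.sum_congr rfl fun j _ => ?_
      by_cases h : 0 < ∑ i, (r : Fin d → ℝ) i * a j i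
      · simp [hb, h, max_eq_left h.le]
      · simp [hb, h, max_eq_right (not_lt.1 h)]
    have h2 : ∑ i, (r : Fin d → ℝ) i * s b i ≤ F b := by
      have := Real.inner_le_Lp_mul_Lq (s := Finset.univ) (r : Fin d → ℝ) (s b) hcpq
      rw [r.2, one_mul] at this
      exact this
    calc (∑ j, max (∑ i, (r : Fin d → ℝ) i * a j i) 0) = _ := h1
      _ ≤ F b := h2
      _ ≤ ⨆ b, F b := le_ciSup (Finite.bddAbove_range F) b
  apply le_antisymm
  · exact ciSup_le hub
  · apply ciSup_le
    intro b
    obtain ⟨r, hr1, hr2⟩ := exists_unit_lp_dot_ge hd hcpq (s b)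
    have h3 : ∑ i, r i * s b i ≤ ∑ j, max (∑ i, r i * a j i) 0 := by
      rw [hswap]
      refine Finset.sum_le_sum fun j _ => ?_
      by_cases h : b j
      · simp [h, le_max_left]
      · simp [h, le_max_right]
    have h4 : (∑ j, max (∑ i, r i * a j i) 0)
        ≤ ⨆ r : {r : Fin d → ℝ // (∑ i, |r i| ^ p) ^ (1 / p) = 1},
            ∑ j, max (∑ i, (r : Fin d → ℝ) i * a j i) 0 :=
      le_ciSup (f := fun r : {r : Fin d → ℝ // (∑ i, |r i| ^ p) ^ (1 / p) = 1} =>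
        ∑ j, max (∑ i, (r : Fin d → ℝ) i * a j i) 0)
        ⟨⨆ b, F b, by rintro x ⟨r, rfl⟩; exact hub r⟩ ⟨r, hr1⟩
    exact le_trans hr2 (le_trans h3 h4)
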